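/- The image of the set of real 2×2 symmetric traceless matrices under the matrix exponential equals the set of real 2×2 symmetric matrices of determinant 1 with positive trace; that is, {exp(x) : x real 2×2 matrix, xᵀ = x, trace x = 0} = {c real 2×2 matrix : cᵀ = c, det c = 1, trace c > 0}. -/

import Mathlib

open Matrix NormedSpace
open scoped Nat

namespace ExpSymAux

noncomputable def M (a b : ℝ) : Matrix (Fin 2) (Fin 2) ℝ := !![a, b; b, -a]

lemma M_transpose (a b : ℝ) : (M a b)ᵀ = M a b := by
  ext i j; fin_cases i <;> fin_cases j <;> simp [M]

lemma M_trace (a b : ℝ) : (M a b).trace = 0 := by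
  simp [M, Matrix.trace_fin_two]

lemma sq_M (a b : ℝ) : (M a b) ^ 2 = (a ^ 2 + b ^ 2) • (1 : Matrix (Fin 2) (Fin 2) ℝ) := by
  rw [pow_two]
  ext i j
  fin_cases i <;> fin_cases j <;>
    simp [M, Matrix.mul_apply, Fin.sum_univ_succ, Matrix.one_apply] <;> ring

lemma M_pow_even (a b r : ℝ) (h : a ^ 2 + b ^ 2 = r ^ 2) (n : ℕ) :
    (M a b) ^ (2 * n) = (r ^ (2 * n)) • (1 : Matrix (Fin 2) (Fin 2) ℝ) := by
  rw [pow_mul, sq_M, h, pow_mul, smul_pow, one_pow]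

lemma M_pow_odd (a b r : ℝ) (h : a ^ 2 + b ^ 2 = r ^ 2) (n : ℕ) :
    (M a b) ^ (2 * n + 1) = (r ^ (2 * n)) • M a b := by
  rw [pow_succ, M_pow_even a b r h, smul_mul_assoc, one_mul]

noncomputable def G (r : ℝ) : ℝ := if r = 0 then 1 else Real.sinh r / r

lemma hasSum_G (r : ℝ) :
    HasSum (fun n : ℕ => r ^ (2 * n) / ((2 * n + 1)! : ℝ)) (G r) := by
  rcases eq_or_ne r 0 with rfl | hr
  · simp only [G, if_pos rfl]
    have he : (fun n : ℕ => (0 : ℝ) ^ (2 * n) / ((2 * n + 1)! : ℝ)) =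
        fun n : ℕ => if n = 0 then (1 : ℝ) else 0 := by
      funext n
      rcases Nat.eq_zero_or_pos n with rfl | hn
      · norm_num
      · rw [if_neg hn.ne', zero_pow (by omega), zero_div]
    rw [he]
    exact hasSum_ite_eq 0 1
  · simp only [G, if_neg hr]
    have h := (Real.hasSum_sinh r).div_const r
    convert h using 1
    · rfl
    funext n
    rw [pow_succ]
    field_simp

lemma G_mul (r : ℝ) : G r * r = Real.sinh r := by
  rcases eq_or_ne r 0 with rfl | hr
  · simp [G]
  · rw [G, if_neg hr, div_mul_cancel₀ _ hr]

lemma exp_M (a b r : ℝ) (h : a ^ 2 + b ^ 2 = r ^ 2) :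
    exp (M a b) = Real.cosh r • (1 : Matrix (Fin 2) (Fin 2) ℝ) + G r • M a b := by
  rw [exp_eq_tsum (𝕂 := ℝ)]
  refine HasSum.tsum_eq ?_
  refine HasSum.even_add_odd ?_ ?_
  · have hc := (Real.hasSum_cosh r).smul_const (1 : Matrix (Fin 2) (Fin 2) ℝ)
    convert hc using 1
    · rfl
    funext n
    rw [M_pow_even a b r h, smul_smul, div_eq_mul_inv, mul_comm]
  · have hs := (hasSum_G r).smul_const (M a b)
    convert hs using 1
    · rfl
    funext n
    rw [M_pow_odd a b r h, smul_smul, div_eq_mul_inv, mul_comm]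

end ExpSymAux

open ExpSymAux in
theorem exp_image_symmetric_traceless :
    NormedSpace.exp '' {x : Matrix (Fin 2) (Fin 2) ℝ | xᵀ = x ∧ x.trace = 0} =
      {c : Matrix (Fin 2) (Fin 2) ℝ | cᵀ = c ∧ c.det = 1 ∧ 0 < c.trace} := by
  ext c
  constructor
  · rintro ⟨x, ⟨hsym, htr⟩, rfl⟩
    obtain ⟨a, ha⟩ : ∃ a, x 0 0 = a := ⟨_, rfl⟩
    obtain ⟨b, hb⟩ : ∃ b, x 0 1 = b := ⟨_, rfl⟩
    have hba : x 1 0 = b := by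
      have := congrFun (congrFun hsym 0) 1
      simp only [Matrix.transpose_apply] at this
      rw [this, hb]
    have hd : x 1 1 = -a := by
      rw [Matrix.trace_fin_two, ha] at htr; linarith
    have hx : x = M a b := by
      ext i j
      fin_cases i <;> fin_cases j <;> simp [M, ha, hb, hba, hd]
    subst hx
    obtain ⟨r, hr, hrnn⟩ : ∃ r, a ^ 2 + b ^ 2 = r ^ 2 ∧ 0 ≤ r :=
      ⟨Real.sqrt (a ^ 2 + b ^ 2), (Real.sq_sqrt (by positivity)).symm, Real.sqrt_nonneg _⟩
    rw [exp_M a b r hr]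
    have hGr := G_mul r
    have hcs := Real.cosh_sq_sub_sinh_sq r
    have hcp := Real.cosh_pos (x := r)
    refine ⟨?_, ?_, ?_⟩
    · simp [Matrix.transpose_add, Matrix.transpose_smul, M_transpose]
    · simp only [Matrix.det_fin_two, Matrix.add_apply, Matrix.smul_apply, Matrix.one_apply, M,
        Matrix.cons_val', Matrix.cons_val_zero, Matrix.cons_val_one, Matrix.head_cons,
        Matrix.head_fin_const, Matrix.empty_val', Matrix.cons_val_fin_one, smul_eq_mul]
      norm_num
      linear_combination hcs - G r ^ 2 * hr - (G r * r + Real.sinh r) * hGr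
    · show 0 < (Real.cosh r • (1 : Matrix (Fin 2) (Fin 2) ℝ) + G r • M a b).trace
      rw [Matrix.trace_add, Matrix.trace_smul, Matrix.trace_smul, Matrix.trace_one, M_trace]
      simp only [smul_eq_mul, mul_zero, add_zero, Fintype.card_fin]
      push_cast
      linarith
  · rintro ⟨hsym, hdet, htr⟩
    obtain ⟨p, hp⟩ : ∃ p, c 0 0 = p := ⟨_, rfl⟩
    obtain ⟨s, hs⟩ : ∃ s, c 1 1 = s := ⟨_, rfl⟩
    obtain ⟨q, hqq⟩ : ∃ q, c 0 1 = q := ⟨_, rfl⟩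
    have hq : c 1 0 = q := by
      have := congrFun (congrFun hsym 0) 1
      simp only [Matrix.transpose_apply] at this
      rw [this, hqq]
    have hc : c = !![p, q; q, s] := by
      ext i j
      fin_cases i <;> fin_cases j <;> simp [hp, hs, hqq, hq]
    subst hc
    have hdet2 : p * s - q * q = 1 := by
      rw [Matrix.det_fin_two_of] at hdet; linarith
    have htr2 : 0 < p + s := by
      rw [Matrix.trace_fin_two] at htr; simpa using htr
    obtain ⟨t, htdef⟩ : ∃ t : ℝ, t = (p + s) / 2 := ⟨_, rfl⟩
    obtain ⟨a, hadef⟩ : ∃ a : ℝ, a = (p - s) / 2 := ⟨_, rfl⟩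
    have ht : 0 < t := by rw [htdef]; linarith
    have h1 : a ^ 2 + q ^ 2 = t ^ 2 - 1 := by
      rw [htdef, hadef]; linear_combination -hdet2
    have ht1 : 1 ≤ t := by nlinarith
    obtain ⟨w, hw, hwnn⟩ : ∃ w, w ^ 2 = t ^ 2 - 1 ∧ 0 ≤ w :=
      ⟨Real.sqrt (t ^ 2 - 1), Real.sq_sqrt (by nlinarith), Real.sqrt_nonneg _⟩
    rcases eq_or_ne w 0 with hw0 | hw0
    · -- c = 1, use x = 0
      rw [hw0] at hw
      have ht2 : t = 1 := by nlinarith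
      have haq : a = 0 ∧ q = 0 := by constructor <;> nlinarith
      have hpv : p = 1 := by rw [htdef] at ht2; rw [hadef] at haq; linarith [haq.1]
      have hsv : s = 1 := by rw [htdef] at ht2; rw [hadef] at haq; linarith [haq.1]
      refine ⟨0, ⟨by simp, by simp⟩, ?_⟩
      rw [exp_zero]
      ext i j
      fin_cases i <;> fin_cases j <;> simp [Matrix.one_apply, hpv, hsv, haq.2]
    · have hwpos : 0 < w := lt_of_le_of_ne hwnn (Ne.symm hw0)
      obtain ⟨ρ, hρdef⟩ : ∃ ρ : ℝ, ρ = Real.log (t + w) := ⟨_, rfl⟩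
      have htwpos : 0 < t + w := by linarith
      have hinv : (t + w)⁻¹ = t - w := by
        have hmul : (t + w) * (t - w) = 1 := by linear_combination -hw
        exact inv_eq_of_mul_eq_one_right hmul
      have hcoshρ : Real.cosh ρ = t := by
        rw [hρdef, Real.cosh_log htwpos, hinv]; ring
      have hsinhρ : Real.sinh ρ = w := by
        rw [hρdef, Real.sinh_log htwpos, hinv]; ring
      have hρpos : 0 < ρ := by rw [hρdef]; exact Real.log_pos (by linarith)
      obtain ⟨l, hldef⟩ : ∃ l : ℝ, l = ρ / w := ⟨_, rfl⟩
      have hform : (l * a) ^ 2 + (l * q) ^ 2 = ρ ^ 2 := by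
        have h2 : (l * a) ^ 2 + (l * q) ^ 2 = l ^ 2 * (a ^ 2 + q ^ 2) := by ring
        rw [h2, h1, ← hw, hldef]
        field_simp
      have hGρ : G ρ = w / ρ := by
        rw [G, if_neg hρpos.ne', hsinhρ]
      have hGl : G ρ * l = 1 := by
        rw [hGρ, hldef]; field_simp
      have hGa : G ρ * (l * a) = a := by rw [← mul_assoc, hGl, one_mul]
      have hGq : G ρ * (l * q) = q := by rw [← mul_assoc, hGl, one_mul]
      refine ⟨M (l * a) (l * q), ⟨M_transpose _ _, M_trace _ _⟩, ?_⟩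
      rw [exp_M _ _ ρ hform]
      ext i j
      fin_cases i <;> fin_cases j <;>
        simp only [Matrix.add_apply, Matrix.smul_apply, Matrix.one_apply, M,
          Matrix.cons_val', Matrix.cons_val_zero, Matrix.cons_val_one, Matrix.head_cons,
          Matrix.empty_val', Matrix.cons_val_fin_one, Matrix.head_fin_const, smul_eq_mul,
          Fin.isValue] <;>
        norm_num [hcoshρ, hGa, hGq]
      · rw [htdef, hadef]; ring
      · rw [htdef, hadef]; ring
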